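/- Let I_1, …, I_n be half-open intervals I_i = [a_i, b_i) with a_i ≤ b_i forming a laminar family (for any two of the intervals, either they are disjoint or one is contained in the other), and let f : ℝ → ℝ be such that g(x) = f(x) − f(0) is super-additive on the nonnegative reals, i.e., g(x+y) ≥ g(x) + g(y) for all x, y ≥ 0. Then every ordering α that respects the inclusions — i.e., whenever I_i ⊊ I_j, the index i appears before j in α — has minimum cost among all orderings. -/

import Mathlib

open MeasureTheory

/-- The cost of an ordering `α` of the sets `S 1, …, S n`: sum over positions `k` of
`f` applied to the Lebesgue measure of the exposed part of the `k`-th set. -/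
noncomputable def exposedCost {n : ℕ} (S : Fin n → Set ℝ) (f : ℝ → ℝ)
    (α : Equiv.Perm (Fin n)) : ℝ :=
  ∑ k : Fin n, f ((volume (S (α k) \ ⋃ (j : Fin n) (_ : j < k), S (α j))).toReal)

namespace Stmt7Aux

variable {n : ℕ}

/-- The atom of index `l`: the part of `S l` not covered by strictly smaller sets of
the family (nor by equal sets with smaller index). -/
def atom (S : Fin n → Set ℝ) (l : Fin n) : Set ℝ :=
  S l \ ⋃ (m : Fin n) (_ : S m ⊂ S l ∨ (S m = S l ∧ m < l)), S m

lemma mem_atom {S : Fin n → Set ℝ} {l : Fin n} {x : ℝ} :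
    x ∈ atom S l ↔ x ∈ S l ∧ ∀ m : Fin n,
      (S m ⊂ S l ∨ (S m = S l ∧ m < l)) → x ∉ S m := by
  simp only [atom, Set.mem_diff, Set.mem_iUnion, not_exists]

open Classical in
/-- The first position of `β` whose set contains `S l`. -/
noncomputable def posFun (S : Fin n → Set ℝ) (β : Equiv.Perm (Fin n)) (l : Fin n) : Fin n :=
  (Finset.univ.filter fun k => S l ⊆ S (β k)).min' ⟨β.symm l, by simp⟩

open Classical in
lemma posFun_spec (S : Fin n → Set ℝ) (β : Equiv.Perm (Fin n)) (l : Fin n) :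
    S l ⊆ S (β (posFun S β l)) := by
  have h := Finset.min'_mem (Finset.univ.filter fun k => S l ⊆ S (β k))
    ⟨β.symm l, by simp⟩
  exact (Finset.mem_filter.mp h).2

open Classical in
lemma posFun_le (S : Fin n → Set ℝ) (β : Equiv.Perm (Fin n)) {l k : Fin n}
    (h : S l ⊆ S (β k)) : posFun S β l ≤ k :=
  Finset.min'_le _ _ (by simp [h])

noncomputable def fiber (S : Fin n → Set ℝ) (β : Equiv.Perm (Fin n)) (k : Fin n) :
    Finset (Fin n) :=
  Finset.univ.filter fun l => posFun S β l = k

lemma mem_fiber {S : Fin n → Set ℝ} {β : Equiv.Perm (Fin n)} {k l : Fin n} :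
    l ∈ fiber S β k ↔ posFun S β l = k := by simp [fiber]

section
variable {S : Fin n → Set ℝ}
  (hlam : ∀ i j, S i ∩ S j = ∅ ∨ S i ⊆ S j ∨ S j ⊆ S i)

include hlam in
lemma lam' {i j : Fin n} {x : ℝ} (hi : x ∈ S i) (hj : x ∈ S j) :
    S i ⊆ S j ∨ S j ⊆ S i := by
  rcases hlam i j with h | h | h
  · exact absurd (Set.mem_inter hi hj) (by simp [h])
  · exact Or.inl h
  · exact Or.inr h

include hlam in
lemma atom_disjoint {l m : Fin n} (hlm : l ≠ m) :
    Disjoint (atom S l) (atom S m) := by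
  rw [Set.disjoint_left]
  intro x hxl hxm
  obtain ⟨hl1, hl2⟩ := mem_atom.mp hxl
  obtain ⟨hm1, hm2⟩ := mem_atom.mp hxm
  have key : ∀ i j : Fin n, i ≠ j → S i ⊆ S j →
      x ∈ S i → x ∈ S j →
      (∀ m', (S m' ⊂ S i ∨ (S m' = S i ∧ m' < i)) → x ∉ S m') →
      (∀ m', (S m' ⊂ S j ∨ (S m' = S j ∧ m' < j)) → x ∉ S m') → False := by
    intro i j hij hsub hxi hxj hi hj
    by_cases heq : S i = S j
    · rcases lt_or_gt_of_ne hij with h | h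
      · exact hj i (Or.inr ⟨heq, h⟩) hxi
      · exact hi j (Or.inr ⟨heq.symm, h⟩) hxj
    · exact hj i (Or.inl ⟨hsub, fun h => heq (le_antisymm hsub h)⟩) hxi
  rcases lam' hlam hl1 hm1 with h | h
  · exact key l m hlm h hl1 hm1 hl2 hm2
  · exact key m l hlm.symm h hm1 hl1 hm2 hl2

include hlam in
lemma exposed_eq
    (hex : ∀ (l : Fin n) (x : ℝ), x ∈ S l → ∃ m, x ∈ atom S m)
    (β : Equiv.Perm (Fin n)) (k : Fin n) :
    S (β k) \ ⋃ (j : Fin n) (_ : j < k), S (β j)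
      = ⋃ l ∈ fiber S β k, atom S l := by
  ext x
  simp only [Set.mem_diff, Set.mem_iUnion, exists_prop, not_exists, not_and,
    Finset.mem_coe, mem_fiber]
  constructor
  · rintro ⟨hxk, hnot⟩
    obtain ⟨m, hm⟩ := hex (β k) x hxk
    obtain ⟨hm1, hm2⟩ := mem_atom.mp hm
    have hsub : S m ⊆ S (β k) := by
      rcases lam' hlam hm1 hxk with h | h
      · exact h
      · by_cases heq : S (β k) = S m
        · exact heq.ge
        · exact absurd hxk (hm2 (β k) (Or.inl (lt_of_le_of_ne h heq)))
    refine ⟨m, ?_, hm⟩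
    have hle : posFun S β m ≤ k := posFun_le S β hsub
    rcases lt_or_eq_of_le hle with h | h
    · exact absurd (posFun_spec S β m hm1) (hnot _ h)
    · exact h
  · rintro ⟨l, hpos, hx⟩
    obtain ⟨hl1, hl2⟩ := mem_atom.mp hx
    have hxk : x ∈ S (β k) := hpos ▸ posFun_spec S β l hl1
    refine ⟨hxk, fun j hj hxj => ?_⟩
    rcases lam' hlam hl1 hxj with h | h
    · exact absurd (posFun_le S β h) (not_le.mpr (hpos ▸ hj))
    · by_cases heq : S (β j) = S l
      · exact absurd (posFun_le S β heq.ge) (not_le.mpr (hpos ▸ hj))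
      · exact hl2 (β j) (Or.inl (lt_of_le_of_ne h heq)) hxj

end

/-- Covering lemma for the Ico family: every point of some `S l` lies in some atom. -/
lemma exists_atom_mem (a b : Fin n → ℝ)
    {l : Fin n} {x : ℝ} (hx : x ∈ Set.Ico (a l) (b l)) :
    ∃ m : Fin n, x ∈ atom (fun i => Set.Ico (a i) (b i)) m := by
  classical
  set S : Fin n → Set ℝ := fun i => Set.Ico (a i) (b i) with hS
  set T : Finset (Fin n) := Finset.univ.filter fun m => x ∈ S m with hT
  have hlT : l ∈ T := by simp only [hT, Finset.mem_filter, Finset.mem_univ, true_and]; exact hx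
  obtain ⟨m₁, hm₁T, hm₁min⟩ := T.exists_min_image (fun m => b m - a m) ⟨l, hlT⟩
  set T' : Finset (Fin n) := T.filter fun m => b m - a m = b m₁ - a m₁ with hT'
  have hm₁T' : m₁ ∈ T' := by simp [hT', hm₁T]
  set m₀ : Fin n := T'.min' ⟨m₁, hm₁T'⟩ with hm₀
  have hm₀T' : m₀ ∈ T' := T'.min'_mem _
  have hm₀T : m₀ ∈ T := (Finset.mem_filter.mp hm₀T').1
  have hm₀len : b m₀ - a m₀ = b m₁ - a m₁ := (Finset.mem_filter.mp hm₀T').2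
  have hxm₀ : x ∈ S m₀ := (Finset.mem_filter.mp hm₀T).2
  refine ⟨m₀, mem_atom.mpr ⟨hxm₀, ?_⟩⟩
  intro m hm hxm
  have hmT : m ∈ T := by simp [hT, hxm]
  have hlen : b m₁ - a m₁ ≤ b m - a m := hm₁min m hmT
  have hne_m : a m < b m := lt_of_le_of_lt hxm.1 hxm.2
  have hne_m₀ : a m₀ < b m₀ := lt_of_le_of_lt hxm₀.1 hxm₀.2
  rcases hm with hstrict | ⟨heq, hlt⟩
  · have hsub := hstrict.1
    have h1 : a m₀ ≤ a m ∧ b m ≤ b m₀ := (Set.Ico_subset_Ico_iff hne_m).mp hsub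
    have hne : ¬ (a m₀ = a m ∧ b m = b m₀) := by
      rintro ⟨h2, h3⟩
      exact hstrict.2 (by rw [hS]; simp only; rw [h2, h3])
    have : b m - a m < b m₀ - a m₀ := by
      rcases h1 with ⟨ha1, hb1⟩
      rcases lt_or_eq_of_le ha1 with h | h
      · linarith
      · rcases lt_or_eq_of_le hb1 with h' | h'
        · linarith
        · exact absurd ⟨h, h'⟩ hne
    linarith [hm₀len ▸ this]
  · have : a m = a m₀ ∧ b m = b m₀ := by
      have := heq
      rw [hS] at this
      simp only at this
      exact (Set.Ico_eq_Ico_iff (Or.inl hne_m)).mp this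
    have hmT' : m ∈ T' := by
      simp only [hT', Finset.mem_filter]
      exact ⟨hmT, by rw [this.1, this.2, hm₀len]⟩
    exact absurd (T'.min'_le m hmT') (not_le.mpr hlt)

lemma sum_g_le {ι : Type*} (f : ℝ → ℝ)
    (hsuper : ∀ x y : ℝ, 0 ≤ x → 0 ≤ y →
      (f x - f 0) + (f y - f 0) ≤ f (x + y) - f 0)
    (s : Finset ι) (x : ι → ℝ) (hx : ∀ i ∈ s, 0 ≤ x i) :
    ∑ i ∈ s, (f (x i) - f 0) ≤ f (∑ i ∈ s, x i) - f 0 := by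
  classical
  induction s using Finset.cons_induction with
  | empty => simp
  | cons c s hc ih =>
    rw [Finset.sum_cons, Finset.sum_cons]
    have h1 : ∑ i ∈ s, (f (x i) - f 0) ≤ f (∑ i ∈ s, x i) - f 0 :=
      ih (fun i hi => hx i (Finset.mem_cons_of_mem hi))
    have h2 : 0 ≤ ∑ i ∈ s, x i :=
      Finset.sum_nonneg (fun i hi => hx i (Finset.mem_cons_of_mem hi))
    have h3 := hsuper (x c) (∑ i ∈ s, x i) (hx c (Finset.mem_cons_self c s)) h2
    linarith

lemma sum_g_eq {ι : Type*} (f : ℝ → ℝ) (s : Finset ι) (x : ι → ℝ)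
    (h0 : ∀ i ∈ s, ∀ j ∈ s, i ≠ j → x i = 0 ∨ x j = 0) :
    ∑ i ∈ s, (f (x i) - f 0) = f (∑ i ∈ s, x i) - f 0 := by
  classical
  induction s using Finset.cons_induction with
  | empty => simp
  | cons c s hc ih =>
    rw [Finset.sum_cons, Finset.sum_cons]
    by_cases hxc : x c = 0
    · rw [hxc]
      have := ih (fun i hi j hj hij =>
        h0 i (Finset.mem_cons_of_mem hi) j (Finset.mem_cons_of_mem hj) hij)
      rw [this]
      ring_nf
    · have hz : ∀ i ∈ s, x i = 0 := by
        intro i hi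
        rcases h0 c (Finset.mem_cons_self c s) i (Finset.mem_cons_of_mem hi)
          (fun h => hc (h ▸ hi)) with h | h
        · exact absurd h hxc
        · exact h
      have h1 : ∑ i ∈ s, x i = 0 := Finset.sum_eq_zero hz
      have h2 : ∑ i ∈ s, (f (x i) - f 0) = 0 :=
        Finset.sum_eq_zero (fun i hi => by rw [hz i hi]; ring)
      rw [h1, h2]
      ring

end Stmt7Aux

open Stmt7Aux in
/-- For a laminar family of half-open intervals and a cost function `f` such that
`g x = f x - f 0` is super-additive on the nonnegative reals, every ordering that
respects the inclusions (whenever `I_i ⊊ I_j`, interval `i` comes before `j`)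
has minimum cost among all orderings. -/
theorem stmt_7 (n : ℕ) (a b : Fin n → ℝ) (hab : ∀ i, a i ≤ b i)
    (hlam : ∀ i j : Fin n,
      Set.Ico (a i) (b i) ∩ Set.Ico (a j) (b j) = ∅ ∨
      Set.Ico (a i) (b i) ⊆ Set.Ico (a j) (b j) ∨
      Set.Ico (a j) (b j) ⊆ Set.Ico (a i) (b i))
    (f : ℝ → ℝ)
    (hsuper : ∀ x y : ℝ, 0 ≤ x → 0 ≤ y →
      (f x - f 0) + (f y - f 0) ≤ f (x + y) - f 0)
    (α : Equiv.Perm (Fin n))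
    (hresp : ∀ i j : Fin n,
      Set.Ico (a i) (b i) ⊂ Set.Ico (a j) (b j) → α.symm i < α.symm j) :
    ∀ β : Equiv.Perm (Fin n),
      exposedCost (fun l => Set.Ico (a l) (b l)) f α ≤
      exposedCost (fun l => Set.Ico (a l) (b l)) f β := by
  classical
  intro β
  set S : Fin n → Set ℝ := fun l => Set.Ico (a l) (b l) with hS
  -- measurability and finiteness
  have hmeasS : ∀ l, MeasurableSet (S l) := fun l => measurableSet_Ico
  have hmeasA : ∀ l, MeasurableSet (atom S l) := fun l =>
    (hmeasS l).diff (MeasurableSet.iUnion fun m => MeasurableSet.iUnion fun _ => hmeasS m)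
  have hfinA : ∀ l, volume (atom S l) ≠ ⊤ := by
    intro l
    refine ne_top_of_le_ne_top ?_ (measure_mono (Set.diff_subset))
    rw [hS]; simp only [Real.volume_Ico]
    exact ENNReal.ofReal_ne_top
  have hex : ∀ (l : Fin n) (x : ℝ), x ∈ S l → ∃ m, x ∈ atom S m :=
    fun l x hx => exists_atom_mem a b hx
  set v : Fin n → ℝ := fun l => (volume (atom S l)).toReal with hv
  have hv0 : ∀ l, 0 ≤ v l := fun l => ENNReal.toReal_nonneg
  -- exposed measure via atoms, for any ordering
  have hμ : ∀ (γ : Equiv.Perm (Fin n)) (k : Fin n),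
      (volume (S (γ k) \ ⋃ (j : Fin n) (_ : j < k), S (γ j))).toReal
        = ∑ l ∈ fiber S γ k, v l := by
    intro γ k
    rw [exposed_eq hlam hex γ k]
    rw [measure_biUnion_finset ?_ (fun l _ => hmeasA l)]
    · exact ENNReal.toReal_sum (fun l _ => hfinA l)
    · intro i _ j _ hij
      exact atom_disjoint hlam hij
  -- fiberwise sum identity
  have hfib : ∀ (γ : Equiv.Perm (Fin n)),
      ∑ k : Fin n, ∑ l ∈ fiber S γ k, (f (v l) - f 0)
        = ∑ l : Fin n, (f (v l) - f 0) := by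
    intro γ
    exact Finset.sum_fiberwise_of_maps_to (fun l _ => Finset.mem_univ _) _
  -- lower bound for arbitrary β
  have hβ : ∑ l : Fin n, (f (v l) - f 0) + n * f 0
      ≤ exposedCost S f β := by
    rw [exposedCost, ← hfib β]
    have : ∀ k : Fin n,
        ∑ l ∈ fiber S β k, (f (v l) - f 0) + f 0
          ≤ f ((volume (S (β k) \ ⋃ (j : Fin n) (_ : j < k), S (β j))).toReal) := by
      intro k
      rw [hμ β k]
      have := sum_g_le f hsuper (fiber S β k) v (fun l _ => hv0 l)
      linarith
    calc ∑ k : Fin n, ∑ l ∈ fiber S β k, (f (v l) - f 0) + n * f 0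
        = ∑ k : Fin n, (∑ l ∈ fiber S β k, (f (v l) - f 0) + f 0) := by
          rw [Finset.sum_add_distrib]
          simp [mul_comm]
      _ ≤ _ := Finset.sum_le_sum (fun k _ => this k)
  -- the respecting ordering attains the bound
  have hkey : ∀ k : Fin n, ∀ l ∈ fiber S α k, S l = S (α k) := by
    intro k l hl
    have hpos : posFun S α l = k := mem_fiber.mp hl
    have h1 : S l ⊆ S (α k) := hpos ▸ posFun_spec S α l
    by_contra hne
    have hstrict : S l ⊂ S (α k) := lt_of_le_of_ne h1 hne
    have h2 : α.symm l < α.symm (α k) := hresp l (α k) hstrict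
    rw [Equiv.symm_apply_apply] at h2
    have h3 : S l ⊆ S (α (α.symm l)) := by rw [Equiv.apply_symm_apply]
    have := posFun_le S α h3
    omega
  have huniq : ∀ k : Fin n, ∀ i ∈ fiber S α k, ∀ j ∈ fiber S α k, i ≠ j →
      v i = 0 ∨ v j = 0 := by
    intro k i hi j hj hij
    have hSij : S i = S j := (hkey k i hi).trans (hkey k j hj).symm
    have hempty : ∀ p q : Fin n, S p = S q → p < q → atom S q = ∅ := by
      intro p q hpq hlt
      ext x
      simp only [Set.mem_empty_iff_false, iff_false]
      intro hx
      obtain ⟨h1, h2⟩ := mem_atom.mp hx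
      exact h2 p (Or.inr ⟨hpq, hlt⟩) (hpq ▸ h1)
    rcases lt_or_gt_of_ne hij with h | h
    · right; rw [hv]; simp only; rw [hempty i j hSij h]; simp
    · left; rw [hv]; simp only; rw [hempty j i hSij.symm h]; simp
  have hα : exposedCost S f α = ∑ l : Fin n, (f (v l) - f 0) + n * f 0 := by
    rw [exposedCost, ← hfib α]
    have : ∀ k : Fin n,
        f ((volume (S (α k) \ ⋃ (j : Fin n) (_ : j < k), S (α j))).toReal)
          = ∑ l ∈ fiber S α k, (f (v l) - f 0) + f 0 := by
      intro k
      rw [hμ α k]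
      have h := sum_g_eq f (fiber S α k) v (huniq k)
      linarith
    rw [Finset.sum_congr rfl (fun k _ => this k), Finset.sum_add_distrib]
    simp [mul_comm]
  rw [hα]
  exact hβ
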